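/- Let U be a finite-dimensional real inner product space, F : ℝ × U → U continuously differentiable, (λ₀, u₀) ∈ ℝ × U, (μ₀, v₀) ∈ ℝ × U, and define G(α, (σ, x)) = (μ₀σ + ⟨v₀, x⟩, F(λ₀ + αμ₀ + σ, u₀ + αv₀ + x)). Suppose ‖D_λF(λ₀, u₀)μ₀ + D_uF(λ₀, u₀)v₀‖_U ≤ ξ, and there are constants M₁, M₂, M₃, M₄ such that for (λ, u) in a suitable neighborhood of (λ₀, u₀) one has ‖D_uF(λ, u) − D_uF(λ₀, u₀)‖ ≤ M₁‖u − u₀‖_U + M₂|λ − λ₀| and ‖D_λF(λ, u) − D_λF(λ₀, u₀)‖ ≤ M₃‖u − u₀‖_U + M₄|λ − λ₀|. Then, with L₃ = ξ and L₄ = (M₁‖v₀‖_U + M₂|μ₀|)‖v₀‖_U + (M₃‖v₀‖_U + M₄|μ₀|)|μ₀|, the derivative of G with respect to the parameter α evaluated at (σ, x) = (0, 0) satisfies ‖D_αG(α, (0, 0))‖ ≤ L₃ + L₄|α| for all α such that (λ₀ + αμ₀, u₀ + αv₀) remains in the neighborhood where the Lipschitz estimates hold. -/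

import Mathlib

open RealInnerProductSpace

/-- for `F : ℝ × U → U` C¹ with
`‖D_λF(λ₀,u₀)μ₀ + D_uF(λ₀,u₀)v₀‖ ≤ ξ` and Lipschitz bounds (constants
`M₁…M₄` on the neighborhood `‖u-u₀‖ ≤ d_u`, `|λ-λ₀| ≤ d_λ`) for `D_uF` and
`D_λF`, the extended map `G(α,(σ,x)) = (μ₀σ + ⟪v₀,x⟫, F(λ₀+αμ₀+σ, u₀+αv₀+x))`
satisfies, with `L₃ = ξ` and
`L₄ = (M₁‖v₀‖+M₂|μ₀|)‖v₀‖ + (M₃‖v₀‖+M₄|μ₀|)|μ₀|`, the estimate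
`‖D_αG(α,(0,0))‖ ≤ L₃ + L₄|α|` for all `α` such that `(λ₀+αμ₀, u₀+αv₀)`
remains in that neighborhood; `ℝ × U` carries the norm
`‖(α,x)‖ = max(|α|,‖x‖)` (the product norm) and operator norms are induced
by it. -/
theorem extended_map_parameter_derivative_bound
    {U : Type*} [NormedAddCommGroup U] [InnerProductSpace ℝ U]
    [FiniteDimensional ℝ U]
    (F : ℝ × U → U) (hF : ContDiff ℝ 1 F)
    (lam₀ : ℝ) (u₀ : U) (μ₀ : ℝ) (v₀ : U)
    (G : ℝ → ℝ × U → ℝ × U)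
    (hGdef : ∀ (α : ℝ) (p : ℝ × U),
      G α p = (μ₀ * p.1 + ⟪v₀, p.2⟫,
               F (lam₀ + α * μ₀ + p.1, u₀ + α • v₀ + p.2)))
    (ξ M₁ M₂ M₃ M₄ du dlam : ℝ) (hdu : 0 < du) (hdlam : 0 < dlam)
    (hξ : ‖fderiv ℝ (fun l => F (l, u₀)) lam₀ μ₀ +
           fderiv ℝ (fun u => F (lam₀, u)) u₀ v₀‖ ≤ ξ)
    (hP3a : ∀ (lam : ℝ) (u : U), ‖u - u₀‖ ≤ du → |lam - lam₀| ≤ dlam →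
        ‖fderiv ℝ (fun w => F (lam, w)) u - fderiv ℝ (fun w => F (lam₀, w)) u₀‖
          ≤ M₁ * ‖u - u₀‖ + M₂ * |lam - lam₀|)
    (hP3b : ∀ (lam : ℝ) (u : U), ‖u - u₀‖ ≤ du → |lam - lam₀| ≤ dlam →
        ‖fderiv ℝ (fun l => F (l, u)) lam - fderiv ℝ (fun l => F (l, u₀)) lam₀‖
          ≤ M₃ * ‖u - u₀‖ + M₄ * |lam - lam₀|)
    (α : ℝ) (hin_u : ‖α • v₀‖ ≤ du) (hin_lam : |α * μ₀| ≤ dlam) :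
    ‖fderiv ℝ (fun a : ℝ => G a (0, 0)) α‖
      ≤ ξ + ((M₁ * ‖v₀‖ + M₂ * |μ₀|) * ‖v₀‖ +
             (M₃ * ‖v₀‖ + M₄ * |μ₀|) * |μ₀|) * |α| := by

  have hFdiff : Differentiable ℝ F := hF.differentiable one_ne_zero
  set pt : ℝ × U := (lam₀ + α * μ₀, u₀ + α • v₀) with hpt
  have hFd : HasFDerivAt F (fderiv ℝ F pt) pt := (hFdiff pt).hasFDerivAt
  have hpartL : ∀ (l : ℝ) (u : U),
      fderiv ℝ (fun l' => F (l', u)) l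
        = (fderiv ℝ F (l, u)).comp ((ContinuousLinearMap.id ℝ ℝ).prod 0) := by
    intro l u
    have h1 : HasFDerivAt (fun l' : ℝ => (l', u))
        ((ContinuousLinearMap.id ℝ ℝ).prod 0) l :=
      HasFDerivAt.prodMk (hasFDerivAt_id l) (hasFDerivAt_const u l)
    exact (((hFdiff (l, u)).hasFDerivAt).comp l h1).fderiv
  have hpartU : ∀ (l : ℝ) (u : U),
      fderiv ℝ (fun u' => F (l, u')) u
        = (fderiv ℝ F (l, u)).comp ((0 : U →L[ℝ] ℝ).prod (ContinuousLinearMap.id ℝ U)) := by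
    intro l u
    have h1 : HasFDerivAt (fun u' : U => (l, u'))
        ((0 : U →L[ℝ] ℝ).prod (ContinuousLinearMap.id ℝ U)) u :=
      HasFDerivAt.prodMk (hasFDerivAt_const l u) (hasFDerivAt_id u)
    exact (((hFdiff (l, u)).hasFDerivAt).comp u h1).fderiv
  have hfun : (fun a : ℝ => G a ((0:ℝ), (0:U)))
      = fun a => ((0:ℝ), F (lam₀ + a * μ₀, u₀ + a • v₀)) := by
    funext a; simp [hGdef]
  have h1 : HasDerivAt (fun a : ℝ => lam₀ + a * μ₀) μ₀ α := by
    simpa using ((hasDerivAt_id α).mul_const μ₀).const_add lam₀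
  have h2 : HasDerivAt (fun a : ℝ => u₀ + a • v₀) v₀ α := by
    simpa using ((hasDerivAt_id α).smul_const v₀).const_add u₀
  have hcurve : HasDerivAt (fun a : ℝ => ((lam₀ + a * μ₀, u₀ + a • v₀) : ℝ × U))
      ((μ₀, v₀) : ℝ × U) α := HasDerivAt.prodMk h1 h2
  have hcomp : HasDerivAt (fun a : ℝ => F (lam₀ + a * μ₀, u₀ + a • v₀))
      (fderiv ℝ F pt (μ₀, v₀)) α := hFd.comp_hasDerivAt α hcurve
  have hG' : HasDerivAt (fun a : ℝ => G a ((0:ℝ), (0:U)))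
      (((0:ℝ), fderiv ℝ F pt (μ₀, v₀)) : ℝ × U) α := by
    rw [hfun]; exact HasDerivAt.prodMk (hasDerivAt_const α (0:ℝ)) hcomp
  rw [hG'.hasFDerivAt.fderiv]
  have hnrm : ‖ContinuousLinearMap.smulRight (1 : ℝ →L[ℝ] ℝ)
      (((0:ℝ), fderiv ℝ F pt (μ₀, v₀)) : ℝ × U)‖ = ‖fderiv ℝ F pt (μ₀, v₀)‖ := by
    rw [ContinuousLinearMap.norm_smulRight_apply]
    simp [Prod.norm_def, norm_nonneg]
  rw [← ContinuousLinearMap.smulRight_one_eq_toSpanSingleton, hnrm]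
  have hsplit : fderiv ℝ F pt (μ₀, v₀)
      = fderiv ℝ (fun l => F (l, pt.2)) pt.1 μ₀ + fderiv ℝ (fun u => F (pt.1, u)) pt.2 v₀ := by
    rw [hpartL pt.1 pt.2, hpartU pt.1 pt.2]
    simp only [ContinuousLinearMap.comp_apply, ContinuousLinearMap.prod_apply,
      ContinuousLinearMap.id_apply, ContinuousLinearMap.zero_apply, ← map_add,
      Prod.mk_add_mk, add_zero, zero_add]
  rw [hsplit]
  set A := fderiv ℝ (fun l => F (l, pt.2)) pt.1
  set A₀ := fderiv ℝ (fun l => F (l, u₀)) lam₀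
  set B := fderiv ℝ (fun u => F (pt.1, u)) pt.2
  set B₀ := fderiv ℝ (fun u => F (lam₀, u)) u₀
  have hBbd : ‖B - B₀‖ ≤ M₁ * ‖α • v₀‖ + M₂ * |α * μ₀| := by
    have := hP3a pt.1 pt.2 (by simpa [hpt] using hin_u) (by simpa [hpt] using hin_lam)
    simpa [hpt, B, B₀] using this
  have hAbd : ‖A - A₀‖ ≤ M₃ * ‖α • v₀‖ + M₄ * |α * μ₀| := by
    have := hP3b pt.1 pt.2 (by simpa [hpt] using hin_u) (by simpa [hpt] using hin_lam)
    simpa [hpt, A, A₀] using this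
  have key : A μ₀ + B v₀ = (A₀ μ₀ + B₀ v₀) + ((A - A₀) μ₀ + (B - B₀) v₀) := by
    simp [ContinuousLinearMap.sub_apply]; abel
  rw [key]
  have hA' : ‖(A - A₀) μ₀‖ ≤ (M₃ * ‖α • v₀‖ + M₄ * |α * μ₀|) * |μ₀| := by
    calc ‖(A - A₀) μ₀‖ ≤ ‖A - A₀‖ * ‖μ₀‖ := (A - A₀).le_opNorm μ₀
    _ ≤ (M₃ * ‖α • v₀‖ + M₄ * |α * μ₀|) * |μ₀| := by
        rw [Real.norm_eq_abs]; exact mul_le_mul_of_nonneg_right hAbd (abs_nonneg _)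
  have hB' : ‖(B - B₀) v₀‖ ≤ (M₁ * ‖α • v₀‖ + M₂ * |α * μ₀|) * ‖v₀‖ := by
    calc ‖(B - B₀) v₀‖ ≤ ‖B - B₀‖ * ‖v₀‖ := (B - B₀).le_opNorm v₀
    _ ≤ (M₁ * ‖α • v₀‖ + M₂ * |α * μ₀|) * ‖v₀‖ :=
        mul_le_mul_of_nonneg_right hBbd (norm_nonneg _)
  have htri : ‖(A₀ μ₀ + B₀ v₀) + ((A - A₀) μ₀ + (B - B₀) v₀)‖
      ≤ ‖A₀ μ₀ + B₀ v₀‖ + (‖(A - A₀) μ₀‖ + ‖(B - B₀) v₀‖) := by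
    calc _ ≤ ‖A₀ μ₀ + B₀ v₀‖ + ‖(A - A₀) μ₀ + (B - B₀) v₀‖ := norm_add_le _ _
    _ ≤ _ := by gcongr; exact norm_add_le _ _
  have hsm : ‖α • v₀‖ = |α| * ‖v₀‖ := by rw [norm_smul, Real.norm_eq_abs]
  have habs : |α * μ₀| = |α| * |μ₀| := abs_mul α μ₀
  rw [hsm, habs] at hA' hB'
  calc ‖(A₀ μ₀ + B₀ v₀) + ((A - A₀) μ₀ + (B - B₀) v₀)‖
      ≤ ‖A₀ μ₀ + B₀ v₀‖ + (‖(A - A₀) μ₀‖ + ‖(B - B₀) v₀‖) := htri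
    _ ≤ ξ + ((M₁ * ‖v₀‖ + M₂ * |μ₀|) * ‖v₀‖ + (M₃ * ‖v₀‖ + M₄ * |μ₀|) * |μ₀|) * |α| := by
        nlinarith [hξ, hA', hB']
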